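/- The 5-element semigroup C_λ = ⟨x, y | x² = x³, xy = x, x²y = 0, y² = 0⟩ satisfies a semigroup identity u ≈ v if and only if: C(u) = C(v); Occ(h(u),u) = 1 iff Occ(h(v),v) = 1; if Occ(h(u),u) = 1 then h(u) = h(v); Occ(h₂(u),u) = 1 iff Occ(h₂(v),v) = 1; and if Occ(h₂(u),u) = 1 then h(u) = h(v) and h₂(u) = h₂(v). -/

import Mathlib

/-- Evaluation of the nonempty word `x :: w` under the substitution `φ`. -/
def evalWord {X S : Type*} [Mul S] (φ : X → S) : X → List X → S
  | x, [] => φ x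
  | x, y :: l => φ x * evalWord φ y l

/-- The 5-element semigroup C_λ = ⟨x, y | x² = x³, xy = x, x²y = 0, y² = 0⟩,
with elements x, x², y, xy, 0. -/
inductive CL : Type | x | x2 | y | xy | zero

def CL.mul : CL → CL → CL
  | .x, .x => .x2
  | .x, .x2 => .x2
  | .x, .y => .xy
  | .x2, .x => .x2
  | .x2, .x2 => .x2
  | .y, .x => .y
  | .y, .x2 => .y
  | .xy, .x => .xy
  | .xy, .x2 => .xy
  | _, _ => .zero

instance : Semigroup CL where
  mul := CL.mul
  mul_assoc := by intro a b c; cases a <;> cases b <;> cases c <;> rfl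

set_option linter.unusedSectionVars false

deriving instance DecidableEq for CL

def CLok : CL → Bool | .x => true | .x2 => true | _ => false

def CLspec {X : Type*} (φ : X → CL) (a b : X) (u : List X) : CL :=
  if CLok (φ b) && u.all (fun z => CLok (φ z)) then φ a * CL.x2
  else if φ a = CL.x ∧ φ b = CL.y ∧ u.all (fun z => CLok (φ z)) = true then CL.xy
  else CL.zero

lemma eval_spec {X : Type*} (φ : X → CL) (a b : X) (u : List X) :
    evalWord φ a (b :: u) = CLspec φ a b u := by
  induction u generalizing a b with
  | nil =>
    show φ a * φ b = _
    unfold CLspec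
    cases hb : φ b <;> cases ha : φ a <;> simp [hb, ha, CLok] <;> rfl
  | cons e u ih =>
    show φ a * evalWord φ b (e :: u) = _
    rw [ih]
    unfold CLspec
    by_cases he : CLok (φ e) && u.all (fun z => CLok (φ z))
    · simp only [List.all_cons, he, Bool.and_true]
      cases hb : φ b <;> cases ha : φ a <;> simp [hb, ha, CLok] <;> rfl
    · have hf : (CLok (φ e) && u.all fun z => CLok (φ z)) = false :=
        Bool.eq_false_iff.mpr he
      simp only [List.all_cons, hf, Bool.and_false, Bool.false_eq_true, and_false,
        if_false, Bool.and_eq_true, false_and]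
      cases ha : φ a <;> simp <;> split <;> rfl

section Main
variable {X : Type*} [DecidableEq X]

lemma count_head_one {a : X} {t : List X} : (a :: t).count a = 1 ↔ a ∉ t := by
  rw [List.count_cons_self, Nat.add_eq_right, List.count_eq_zero]

lemma back_aux (a b c d : X) (u v : List X)
    (hC : ∀ z, z ∈ a :: b :: u ↔ z ∈ c :: d :: v)
    (h2 : (a::b::u).count a = 1 → (c::d::v).count c = 1)
    (h3 : (a::b::u).count a = 1 → a = c)
    (h4 : (a::b::u).count b = 1 → (c::d::v).count d = 1)
    (h5 : (a::b::u).count b = 1 → a = c ∧ b = d)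
    (φ : X → CL) :
    CLspec φ a b u = CL.zero ∨ CLspec φ a b u = CLspec φ c d v := by
  unfold CLspec
  by_cases hA : (CLok (φ b) && u.all fun z => CLok (φ z)) = true
  · rw [if_pos hA]
    have hTw : ∀ z ∈ b :: u, CLok (φ z) = true := by
      rw [Bool.and_eq_true, List.all_eq_true] at hA
      intro z hz
      rcases List.mem_cons.mp hz with rfl | hz'
      · exact hA.1
      · exact hA.2 z hz' 
    right
    by_cases hok : CLok (φ a) = true
    · have hall : ∀ z ∈ c :: d :: v, CLok (φ z) = true := by
        intro z hz
        rcases List.mem_cons.mp ((hC z).mpr hz) with rfl | hz'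
        · exact hok
        · exact hTw z hz'
      have hA' : (CLok (φ d) && v.all fun z => CLok (φ z)) = true := by
        rw [Bool.and_eq_true, List.all_eq_true]
        exact ⟨hall d (by simp), fun z hz => hall z (by simp [hz])⟩
      rw [if_pos hA']
      have hc : CLok (φ c) = true := hall c (by simp)
      cases hpa : φ a <;> cases hpc : φ c <;> simp_all [CLok] <;> rfl
    · have hna : a ∉ b :: u := fun h => hok (hTw a h)
      have hcount : (a::b::u).count a = 1 := count_head_one.mpr hna
      have hac : a = c := h3 hcount
      have hnc : c ∉ d :: v := count_head_one.mp (h2 hcount)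
      have hA' : (CLok (φ d) && v.all fun z => CLok (φ z)) = true := by
        rw [Bool.and_eq_true, List.all_eq_true]
        have key : ∀ z ∈ d :: v, CLok (φ z) = true := by
          intro z hz
          rcases List.mem_cons.mp ((hC z).mpr (List.mem_cons_of_mem c hz)) with rfl | hz'
          · exact absurd (hac ▸ hz) hnc
          · exact hTw z hz'
        exact ⟨key d (by simp), fun z hz => key z (by simp [hz])⟩
      rw [if_pos hA', hac]
  · rw [if_neg hA]
    by_cases hB : φ a = CL.x ∧ φ b = CL.y ∧ (u.all fun z => CLok (φ z)) = true
    · right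
      rw [if_pos hB]
      obtain ⟨ha, hb, hu⟩ := hB
      have hbu : b ∉ u := fun h => by
        have := List.all_eq_true.mp hu b h; rw [hb] at this; exact absurd this (by simp [CLok])
      have hab : b ≠ a := by intro h; rw [← h, hb] at ha; cases ha
      have hcount : (a::b::u).count b = 1 := by
        rw [List.count_cons_of_ne hab.symm, count_head_one]; exact hbu
      obtain ⟨hac, hbd⟩ := h5 hcount
      have hcv : (c::d::v).count d = 1 := h4 hcount
      have hdc : d ≠ c := by
        intro h; subst h
        rw [List.count_cons_self, List.count_cons_self] at hcv; omega
      have hdv : d ∉ v := by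
        rw [List.count_cons_of_ne hdc.symm, count_head_one] at hcv; exact hcv
      have hposC : φ c = CL.x ∧ φ d = CL.y ∧ (v.all fun z => CLok (φ z)) = true := by
        refine ⟨hac ▸ ha, hbd ▸ hb, List.all_eq_true.mpr ?_⟩
        intro z hz
        have hzw : z ∈ a :: b :: u := (hC z).mpr (by simp [hz])
        have hzd : z ≠ d := fun h => hdv (h ▸ hz)
        rcases List.mem_cons.mp hzw with rfl | hz'
        · rw [ha]; rfl
        · rcases List.mem_cons.mp hz' with rfl | hz''
          · exact absurd hbd hzd
          · exact List.all_eq_true.mp hu z hz''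
      have hnegC : ¬(CLok (φ d) && v.all fun z => CLok (φ z)) = true := by
        rw [← hbd, hb]; simp [CLok]
      rw [if_neg hnegC, if_pos hposC]
    · left
      rw [if_neg hB]

end Main

section Fwd
variable {X : Type*} [DecidableEq X]

lemma spec_zero_of_mem_zero (φ : X → CL) (a b : X) (u : List X)
    (hz : ∃ z ∈ a :: b :: u, φ z = CL.zero) : CLspec φ a b u = CL.zero := by
  obtain ⟨z, hzm, hz0⟩ := hz
  unfold CLspec
  rcases List.mem_cons.mp hzm with rfl | hz'
  · split
    · rw [hz0]; rfl
    · split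
      · rename_i h; rw [h.1] at hz0; cases hz0
      · rfl
  · have hnok : CLok (φ z) = false := by rw [hz0]; rfl
    rcases List.mem_cons.mp hz' with rfl | hz''
    · rw [if_neg (by simp [hnok]), if_neg (by rintro ⟨-, h, -⟩; rw [h] at hz0; cases hz0)]
    · have hu : (u.all fun t => CLok (φ t)) = false := by
        rw [List.all_eq_false]; exact ⟨z, hz'', by simp [hnok]⟩
      rw [if_neg (by simp [hu]), if_neg (by rintro ⟨-, -, h⟩; rw [hu] at h; cases h)]

lemma spec_all_x2 (φ : X → CL) (a b : X) (u : List X)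
    (h : ∀ z ∈ a :: b :: u, φ z = CL.x2) : CLspec φ a b u = CL.x2 := by
  unfold CLspec
  rw [if_pos, h a (by simp)]
  · rfl
  · rw [Bool.and_eq_true, List.all_eq_true]
    exact ⟨by rw [h b (by simp)]; rfl, fun z hz => by rw [h z (by simp [hz])]; rfl⟩

lemma spec_eq_y (φ : X → CL) (c d : X) (v : List X)
    (h : CLspec φ c d v = CL.y) :
    φ c = CL.y ∧ (CLok (φ d) && v.all fun z => CLok (φ z)) = true := by
  unfold CLspec at h
  split at h
  · refine ⟨?_, by assumption⟩
    cases hc : φ c <;> rw [hc] at h <;> first | rfl | cases h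
  · split at h <;> cases h

lemma spec_eq_xy (φ : X → CL) (c d : X) (v : List X)
    (hnoxy : ∀ z : X, φ z ≠ CL.xy)
    (h : CLspec φ c d v = CL.xy) :
    φ c = CL.x ∧ φ d = CL.y ∧ (v.all fun z => CLok (φ z)) = true := by
  unfold CLspec at h
  split at h
  · exfalso
    cases hc : φ c <;> rw [hc] at h <;> first | exact hnoxy c hc | cases h
  · split at h
    · assumption
    · cases h

lemma spec_y_of_count (φ : X → CL) (a b : X) (u : List X)
    (hy : φ a = CL.y) (hok : ∀ z ∈ b :: u, z ≠ a → CLok (φ z) = true)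
    (h1 : (a :: b :: u).count a = 1) : CLspec φ a b u = CL.y := by
  have hna : a ∉ b :: u := count_head_one.mp h1
  unfold CLspec
  rw [if_pos, hy]
  · rfl
  · rw [Bool.and_eq_true, List.all_eq_true]
    exact ⟨hok b (by simp) (fun h => hna (h ▸ List.mem_cons_self)),
      fun z hz => hok z (by simp [hz]) (fun h => hna (h ▸ List.mem_cons_of_mem b hz))⟩

lemma spec_xy_of_count (φ : X → CL) (a b : X) (u : List X)
    (hx : φ a = CL.x) (hy : φ b = CL.y)
    (hok : ∀ z ∈ u, z ≠ b → CLok (φ z) = true)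
    (h1 : (a :: b :: u).count b = 1) : CLspec φ a b u = CL.xy := by
  have hab : b ≠ a := by
    intro h; rw [h] at h1; rw [List.count_cons_self, List.count_cons_self] at h1; omega
  have hbu : b ∉ u := by
    rw [List.count_cons_of_ne hab.symm, count_head_one] at h1; exact h1
  unfold CLspec
  rw [if_neg, if_pos]
  · refine ⟨hx, hy, List.all_eq_true.mpr fun z hz => hok z hz (fun h => hbu (h ▸ hz))⟩
  · rw [hy]; simp [CLok]

end Fwd

lemma headKey {X : Type*} [DecidableEq X] (a b c d : X) (u v : List X)
    (hs : ∀ φ : X → CL, CLspec φ a b u = CLspec φ c d v)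
    (h1 : (a :: b :: u).count a = 1) : a = c ∧ (c :: d :: v).count c = 1 := by
  set φ : X → CL := fun t => if t = a then CL.y else CL.x2 with hφ
  have hL : CLspec φ a b u = CL.y :=
    spec_y_of_count φ a b u (by simp [hφ]) (fun z hz hza => by simp [hφ, hza, CLok]) h1
  have hR := spec_eq_y φ c d v ((hs φ).symm.trans hL)
  have hac : c = a := by
    by_contra h
    simp [hφ, h] at hR
  refine ⟨hac.symm, count_head_one.mpr ?_⟩
  intro hcm
  rw [Bool.and_eq_true, List.all_eq_true] at hR
  have : CLok (φ c) = true := by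
    rcases List.mem_cons.mp hcm with rfl | hcv
    · exact hR.2.1
    · exact hR.2.2 c hcv
  rw [hφ] at this
  simp [hac] at this
  cases this

lemma head2Key {X : Type*} [DecidableEq X] (a b c d : X) (u v : List X)
    (hs : ∀ φ : X → CL, CLspec φ a b u = CLspec φ c d v)
    (h1 : (a :: b :: u).count b = 1) : (a = c ∧ b = d) ∧ (c :: d :: v).count d = 1 := by
  have hba : b ≠ a := by
    intro h; rw [h, List.count_cons_self, List.count_cons_self] at h1; omega
  set φ : X → CL := fun t => if t = b then CL.y else if t = a then CL.x else CL.x2 with hφ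
  have hL : CLspec φ a b u = CL.xy :=
    spec_xy_of_count φ a b u (by simp [hφ, hba.symm]) (by simp [hφ])
      (fun z hz hzb => by
        by_cases hza : z = a <;> simp [hφ, hzb, hza, Ne.symm hba, CLok]) h1
  have hnoxy : ∀ z : X, φ z ≠ CL.xy := by
    intro z
    by_cases h1 : z = b <;> by_cases h2 : z = a <;> simp [hφ, h1, h2, Ne.symm hba]
  have hR := spec_eq_xy φ c d v hnoxy ((hs φ).symm.trans hL)
  obtain ⟨hc, hd, hv⟩ := hR
  have hdb : d = b := by
    by_contra h
    by_cases h' : d = a <;> simp [hφ, h, h', Ne.symm hba] at hd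
  have hca : c = a := by
    have hcb : c ≠ b := by intro h; simp [hφ, h] at hc
    by_contra h
    simp [hφ, h, hcb] at hc
  have hdc : d ≠ c := by rw [hdb, hca]; exact hba
  refine ⟨⟨hca.symm, hdb.symm⟩, ?_⟩
  rw [List.count_cons_of_ne hdc.symm, count_head_one]
  intro hdv
  have := List.all_eq_true.mp hv d hdv
  rw [hφ] at this
  simp [hdb, CLok] at this

/-- C_λ satisfies the identity `a :: b :: u ≈ c :: d :: v` iff the contents coincide,
the heads are simultaneously simple (and then equal), and the second letters are
simultaneously simple (and then the first two letters of both sides coincide). -/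
theorem CL_satisfies_iff {X : Type*} [DecidableEq X]
    (a b c d : X) (u v : List X) :
    (∀ φ : X → CL, evalWord φ a (b :: u) = evalWord φ c (d :: v)) ↔
      ((∀ z : X, z ∈ a :: b :: u ↔ z ∈ c :: d :: v) ∧
        ((a :: b :: u).count a = 1 ↔ (c :: d :: v).count c = 1) ∧
        ((a :: b :: u).count a = 1 → a = c) ∧
        ((a :: b :: u).count b = 1 ↔ (c :: d :: v).count d = 1) ∧
        ((a :: b :: u).count b = 1 → a = c ∧ b = d)) := by
  constructor
  · intro h
    have hs : ∀ φ : X → CL, CLspec φ a b u = CLspec φ c d v := fun φ => by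
      rw [← eval_spec, ← eval_spec]; exact h φ
    have hs' : ∀ φ : X → CL, CLspec φ c d v = CLspec φ a b u := fun φ => (hs φ).symm
    have hC : ∀ z : X, z ∈ a :: b :: u ↔ z ∈ c :: d :: v := by
      have key : ∀ (a b c d : X) (u v : List X),
          (∀ φ : X → CL, CLspec φ a b u = CLspec φ c d v) →
          ∀ z : X, z ∈ a :: b :: u → z ∈ c :: d :: v := by
        intro a b c d u v hs z hz
        by_contra hz'
        have h1 := hs (fun t => if t = z then CL.zero else CL.x2)
        rw [spec_zero_of_mem_zero _ _ _ _ ⟨z, hz, by simp⟩,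
          spec_all_x2 _ _ _ _ (fun t ht => by
            rw [if_neg]; intro he; exact hz' (he ▸ ht))] at h1
        cases h1
      exact fun z => ⟨key a b c d u v hs z, key c d a b v u hs' z⟩
    refine ⟨hC, ⟨fun h1 => (headKey a b c d u v hs h1).2,
        fun h1 => (headKey c d a b v u hs' h1).2⟩,
      fun h1 => (headKey a b c d u v hs h1).1,
      ⟨fun h1 => (head2Key a b c d u v hs h1).2,
        fun h1 => (head2Key c d a b v u hs' h1).2⟩,
      fun h1 => (head2Key a b c d u v hs h1).1⟩
  · rintro ⟨hC, h2, h3, h4, h5⟩ φ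
    rw [eval_spec, eval_spec]
    rcases back_aux a b c d u v hC h2.mp h3 h4.mp h5 φ with hz | he
    · rcases back_aux c d a b v u (fun z => (hC z).symm) h2.mpr
        (fun h => (h3 (h2.mpr h)).symm) h4.mpr
        (fun h => ⟨(h5 (h4.mpr h)).1.symm, (h5 (h4.mpr h)).2.symm⟩) φ with hz' | he'
      · rw [hz, hz']
      · exact he'.symm
    · exact he
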